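/- Let P be a set of n points in the plane in general position, let c be a centerpoint of P, and let p ∈ P with p ≠ c. Then each of the two closed halfplanes determined by the line through c and p contains at least ⌈n/3⌉ + 1 points of P; formally, for every nonzero linear functional f : ℝ² → ℝ with f(c) = f(p), the set {q ∈ P : f(q) ≥ f(c)} has at least ⌈n/3⌉ + 1 elements. -/

import Mathlib

open RealInnerProductSpace

/-- A centerpoint of a finite set `P` of points in `ℝ^d`: every closed halfspace
containing `c` contains at least `⌈|P|/(d+1)⌉` points of `P`. -/
def IsCenterpoint {d : ℕ} (P : Finset (EuclideanSpace ℝ (Fin d)))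
    (c : EuclideanSpace ℝ (Fin d)) : Prop :=
  ∀ (f : EuclideanSpace ℝ (Fin d) →ₗ[ℝ] ℝ) (a : ℝ), f ≠ 0 → a ≤ f c →
    ⌈(P.card : ℚ) / (d + 1)⌉₊ ≤ (P.filter fun q => a ≤ f q).card

/-- for a centerpoint `c` of `n` points in general position in the plane
and a point `p ∈ P` with `p ≠ c`, each closed halfplane bounded by the line through
`c` and `p` contains at least `⌈n/3⌉ + 1` points of `P`. -/
theorem centerpoint_line_halfplane
    (P : Finset (EuclideanSpace ℝ (Fin 2))) (n : ℕ) (hn : P.card = n)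
    (hgp : ∀ p ∈ P, ∀ q ∈ P, ∀ r ∈ P, p ≠ q → p ≠ r → q ≠ r →
      AffineIndependent ℝ ![p, q, r])
    (c : EuclideanSpace ℝ (Fin 2)) (hc : IsCenterpoint P c)
    (p : EuclideanSpace ℝ (Fin 2)) (hp : p ∈ P) (hpc : p ≠ c) :
    ∀ f : EuclideanSpace ℝ (Fin 2) →ₗ[ℝ] ℝ, f ≠ 0 → f c = f p →
      ⌈(n : ℚ) / 3⌉₊ + 1 ≤ (P.filter fun q => f c ≤ f q).card := by
  intro f hf hfc
  classical
  set v : EuclideanSpace ℝ (Fin 2) := p - c with hv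
  have hvne : v ≠ 0 := sub_ne_zero.mpr hpc
  set T : Finset (EuclideanSpace ℝ (Fin 2)) :=
    P.filter (fun q => f q < f c ∧ (inner ℝ v q : ℝ) < (inner ℝ v c : ℝ)) with hT
  set ε : ℝ := if h : T.Nonempty then
      (T.inf' h (fun q => (f c - f q) / ((inner ℝ v c : ℝ) - (inner ℝ v q : ℝ)))) / 2 else 1 with hε
  have hmemT : ∀ q ∈ T, f q < f c ∧ (inner ℝ v q : ℝ) < (inner ℝ v c : ℝ) := by
    intro q hq
    exact (Finset.mem_filter.mp hq).2
  have hεpos : 0 < ε := by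
    rw [hε]
    split
    · rename_i h
      apply div_pos _ (by norm_num)
      rw [Finset.lt_inf'_iff]
      intro q hq
      obtain ⟨h1, h2⟩ := hmemT q hq
      exact div_pos (by linarith) (by linarith)
    · norm_num
  have hεT : ∀ q ∈ T, ε * ((inner ℝ v c : ℝ) - (inner ℝ v q : ℝ)) < f c - f q := by
    intro q hq
    obtain ⟨h1, h2⟩ := hmemT q hq
    have hd : 0 < (inner ℝ v c : ℝ) - (inner ℝ v q : ℝ) := by linarith
    have hεle : ε ≤ (f c - f q) / ((inner ℝ v c : ℝ) - (inner ℝ v q : ℝ)) / 2 := by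
      rw [hε, dif_pos ⟨q, hq⟩]
      have := Finset.inf'_le (fun q => (f c - f q) / ((inner ℝ v c : ℝ) - (inner ℝ v q : ℝ))) hq
      linarith
    have hvpos : 0 < (f c - f q) / ((inner ℝ v c : ℝ) - (inner ℝ v q : ℝ)) :=
      div_pos (by linarith) hd
    have hεlt : ε < (f c - f q) / ((inner ℝ v c : ℝ) - (inner ℝ v q : ℝ)) := by linarith
    calc ε * ((inner ℝ v c : ℝ) - (inner ℝ v q : ℝ))
        < ((f c - f q) / ((inner ℝ v c : ℝ) - (inner ℝ v q : ℝ))) * ((inner ℝ v c : ℝ) - (inner ℝ v q : ℝ)) := by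
          exact mul_lt_mul_of_pos_right hεlt hd
      _ = f c - f q := div_mul_cancel₀ _ (ne_of_gt hd)
  set g : EuclideanSpace ℝ (Fin 2) →ₗ[ℝ] ℝ :=
    f - ε • (innerSL ℝ v).toLinearMap with hg
  have hgapp : ∀ x, g x = f x - ε * (inner ℝ v x : ℝ) := by
    intro x
    simp [hg]
  have hinnerpc : (inner ℝ v p : ℝ) - (inner ℝ v c : ℝ) = ‖v‖ ^ 2 := by
    rw [← inner_sub_right, ← hv, real_inner_self_eq_norm_sq]
  have hnormpos : 0 < ‖v‖ ^ 2 := by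
    have := norm_pos_iff.mpr hvne
    positivity
  have hgp' : g p < g c := by
    rw [hgapp, hgapp, hfc]
    nlinarith
  have hgne : g ≠ 0 := by
    intro h0
    rw [h0] at hgp'
    simp at hgp'
  have hS := hc g (g c) hgne le_rfl
  set S : Finset (EuclideanSpace ℝ (Fin 2)) := P.filter (fun q => g c ≤ g q) with hSdef
  have hpS : p ∉ S := by
    simp only [hSdef, Finset.mem_filter]
    rintro ⟨-, h⟩
    exact absurd h (not_le.mpr hgp')
  have hsub : insert p S ⊆ P.filter (fun q => f c ≤ f q) := by
    intro q hq
    rcases Finset.mem_insert.mp hq with rfl | hq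
    · exact Finset.mem_filter.mpr ⟨hp, le_of_eq hfc⟩
    · obtain ⟨hqP, hgq⟩ := Finset.mem_filter.mp hq
      refine Finset.mem_filter.mpr ⟨hqP, ?_⟩
      by_contra hlt
      push_neg at hlt
      rcases le_or_gt ((inner ℝ v c : ℝ)) ((inner ℝ v q : ℝ)) with h' | h'
      · have : g q < g c := by
          rw [hgapp, hgapp]
          nlinarith
        exact absurd hgq (not_le.mpr this)
      · have hqT : q ∈ T := Finset.mem_filter.mpr ⟨hqP, hlt, h'⟩
        have := hεT q hqT
        have : g q < g c := by
          rw [hgapp, hgapp]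
          linarith
        exact absurd hgq (not_le.mpr this)
  have h3 : ((2 : ℕ) : ℚ) + 1 = 3 := by norm_num
  rw [h3, hn] at hS
  have hcard : S.card + 1 ≤ (P.filter (fun q => f c ≤ f q)).card := by
    calc S.card + 1 = (insert p S).card := (Finset.card_insert_of_notMem hpS).symm
      _ ≤ _ := Finset.card_le_card hsub
  omega
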